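/- arXiv:2604.02751 — 3 statements merged into one kernel-verified Lean document; each statement's English description precedes it below -/
import Mathlib

section
/- Let k ≥ 1 and let μ be a Borel probability measure on ℝ^k. For every τ > 0 and every y ∈ ℝ^k, Tweedie's formula holds: τ · ∇_y log p_τ(y) = m_τ(y) − y, where m_τ(y) = (∫ x φ_τ^{(k)}(y − x) dμ(x)) / p_τ(y) is the posterior mean of a clean sample given the noisy observation y. -/
open MeasureTheory Real

set_option synthInstance.maxHeartbeats 1000000
set_option maxHeartbeats 1000000

noncomputable section

abbrev Euc (k : ℕ) : Type := EuclideanSpace ℝ (Fin k)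

/-- The centered Gaussian density on `ℝ^k` with covariance `τ • I`. -/
def gaussDensity (k : ℕ) (τ : ℝ) (z : Euc k) : ℝ :=
  (2 * Real.pi * τ) ^ (-(k : ℝ) / 2) * Real.exp (-‖z‖ ^ 2 / (2 * τ))

/-- The heat-smoothed density `p_τ(x) = ∫ φ_τ(x - y) dμ(y)`. -/
def heatDensity {k : ℕ} (μ : Measure (Euc k)) (τ : ℝ) (x : Euc k) : ℝ :=
  ∫ y, gaussDensity k τ (x - y) ∂μ

/-- Partial derivative of `f` in the `i`-th coordinate direction. -/
def pderiv' {k : ℕ} (f : Euc k → ℝ) (i : Fin k) (x : Euc k) : ℝ :=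
  fderiv ℝ f x (EuclideanSpace.single i 1)

/-- Entry `(i, j)` of the Hessian matrix of `f` at `x`. -/
def hessEntry {k : ℕ} (f : Euc k → ℝ) (i j : Fin k) (x : Euc k) : ℝ :=
  pderiv' (pderiv' f j) i x

/-- The Laplacian of `f` at `x`. -/
def laplacian' {k : ℕ} (f : Euc k → ℝ) (x : Euc k) : ℝ :=
  ∑ i, hessEntry f i i x

/-- The squared Frobenius norm of the Hessian of `f` at `x`. -/
def hessFrobSq {k : ℕ} (f : Euc k → ℝ) (x : Euc k) : ℝ :=
  ∑ i, ∑ j, hessEntry f i j x ^ 2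

/-- The log heat-smoothed density. -/
def logHeat {k : ℕ} (μ : Measure (Euc k)) (τ : ℝ) (x : Euc k) : ℝ :=
  Real.log (heatDensity μ τ x)

/-- The Fisher Information `I^{(k)}(μ_τ) = ∫ p_τ ‖∇ log p_τ‖²`. -/
def FisherInfo {k : ℕ} (μ : Measure (Euc k)) (τ : ℝ) : ℝ :=
  ∫ x, heatDensity μ τ x * ‖gradient (logHeat μ τ) x‖ ^ 2

/-- The Fisher Information Rate `R^{(k)}(μ_τ) = ∫ p_τ ‖∇² log p_τ‖_F²`. -/
def FisherInfoRate {k : ℕ} (μ : Measure (Euc k)) (τ : ℝ) : ℝ :=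
  ∫ x, heatDensity μ τ x * hessFrobSq (logHeat μ τ) x

/-- The posterior mean `m_τ(x)` of a clean sample given noisy observation `x`. -/
def postMean {k : ℕ} (μ : Measure (Euc k)) (τ : ℝ) (x : Euc k) : Euc k :=
  (heatDensity μ τ x)⁻¹ • ∫ y, gaussDensity k τ (x - y) • y ∂μ

variable {k : ℕ} {τ : ℝ}

lemma gauss_pos (hτ : 0 < τ) (z : Euc k) : 0 < gaussDensity k τ z := by
  unfold gaussDensity
  have : (0:ℝ) < 2 * Real.pi * τ := by positivity
  positivity

lemma gauss_cont : Continuous (gaussDensity k τ) := by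
  unfold gaussDensity; fun_prop

lemma gauss_le (hτ : 0 < τ) (z : Euc k) :
    gaussDensity k τ z ≤ (2 * Real.pi * τ) ^ (-(k : ℝ) / 2) := by
  unfold gaussDensity
  have h1 : Real.exp (-‖z‖ ^ 2 / (2 * τ)) ≤ 1 := by
    rw [Real.exp_le_one_iff]
    exact div_nonpos_of_nonpos_of_nonneg (neg_nonpos.2 (by positivity)) (by linarith)
  have h2 : (0:ℝ) < (2 * Real.pi * τ) ^ (-(k : ℝ) / 2) := by
    have : (0:ℝ) < 2 * Real.pi * τ := by positivity
    positivity
  nlinarith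

lemma norm_mul_exp_le (hτ : 0 < τ) (t : ℝ) (ht : 0 ≤ t) :
    t * Real.exp (-t ^ 2 / (2 * τ)) ≤ Real.sqrt (2 * τ) := by
  set s := Real.sqrt (2 * τ) with hs
  have hs2 : s ^ 2 = 2 * τ := Real.sq_sqrt (by linarith)
  have hspos : 0 < s := Real.sqrt_pos.2 (by linarith)
  have hexp : t ^ 2 / (2 * τ) + 1 ≤ Real.exp (t ^ 2 / (2 * τ)) := by
    have := Real.add_one_le_exp (t ^ 2 / (2 * τ)); linarith
  have key : t ≤ s * Real.exp (t ^ 2 / (2 * τ)) := by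
    have h1 : t ≤ s * (t ^ 2 / (2 * τ) + 1) := by
      rw [← hs2, ← mul_le_mul_iff_of_pos_right hspos]
      have hfield : s * (t ^ 2 / s ^ 2 + 1) * s = t ^ 2 + s ^ 2 := by
        field_simp
      rw [hfield]
      nlinarith [sq_nonneg (t - s)]
    calc t ≤ s * (t ^ 2 / (2 * τ) + 1) := h1
      _ ≤ s * Real.exp (t ^ 2 / (2 * τ)) := by
          apply mul_le_mul_of_nonneg_left hexp hspos.le
  rw [neg_div, Real.exp_neg]
  rw [mul_inv_le_iff₀' (Real.exp_pos _)]
  linarith [key]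

lemma hasFDerivAt_gauss (hτ : 0 < τ) (a x : Euc k) :
    HasFDerivAt (fun x => gaussDensity k τ (x - a))
      ((-(τ⁻¹ * gaussDensity k τ (x - a))) • (innerSL ℝ (x - a))) x := by
  have hsub : HasFDerivAt (fun x : Euc k => x - a) (ContinuousLinearMap.id ℝ (Euc k)) x :=
    (hasFDerivAt_id x).sub_const a
  have hinner : HasFDerivAt (fun x : Euc k => (inner ℝ (x - a) (x - a) : ℝ))
      ((fderivInnerCLM ℝ (x - a, x - a)).comp
        ((ContinuousLinearMap.id ℝ (Euc k)).prod (ContinuousLinearMap.id ℝ (Euc k)))) x :=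
    hsub.inner ℝ hsub
  have heq : ∀ z : Euc k, gaussDensity k τ z
      = (2 * Real.pi * τ) ^ (-(k : ℝ) / 2) * Real.exp (-(inner ℝ z z : ℝ) / (2 * τ)) := by
    intro z
    rw [real_inner_self_eq_norm_sq]
    rfl
  have hg : HasFDerivAt (fun x : Euc k => -(inner ℝ (x - a) (x - a) : ℝ) / (2 * τ))
      ((-(2*τ)⁻¹) • ((fderivInnerCLM ℝ (x - a, x - a)).comp
        ((ContinuousLinearMap.id ℝ (Euc k)).prod (ContinuousLinearMap.id ℝ (Euc k))))) x := by
    have := hinner.const_smul (-(2*τ)⁻¹)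
    refine this.congr_of_eventuallyEq (Filter.Eventually.of_forall fun z => ?_)
    simp only [Pi.smul_apply, smul_eq_mul]; ring
  have hexp := (Real.hasDerivAt_exp (-(inner ℝ (x - a) (x - a) : ℝ) / (2 * τ))).comp_hasFDerivAt x hg
  have hfinal := hexp.const_mul ((2 * Real.pi * τ) ^ (-(k : ℝ) / 2))
  have : (fun x : Euc k => (2 * Real.pi * τ) ^ (-(k : ℝ) / 2)
      * Real.exp (-(inner ℝ (x - a) (x - a) : ℝ) / (2 * τ)))
      = (fun x => gaussDensity k τ (x - a)) := by
    funext z; rw [heq]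
  simp only [Function.comp_def] at hfinal
  rw [this] at hfinal
  refine hfinal.congr_fderiv ?_
  ext h
  simp only [ContinuousLinearMap.coe_smul', Pi.smul_apply, innerSL_apply_apply, smul_eq_mul,
    ContinuousLinearMap.coe_comp', Function.comp_apply, ContinuousLinearMap.prod_apply,
    ContinuousLinearMap.coe_id', id_eq, fderivInnerCLM_apply]
  rw [heq, real_inner_comm h (x - a)]
  ring

variable (μ : Measure (Euc k)) [IsProbabilityMeasure μ]

lemma integrable_gauss (hτ : 0 < τ) (x : Euc k) :
    Integrable (fun a => gaussDensity k τ (x - a)) μ := by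
  apply Integrable.mono' (integrable_const ((2 * Real.pi * τ) ^ (-(k:ℝ)/2)))
  · exact (gauss_cont.comp (continuous_const.sub continuous_id)).aestronglyMeasurable
  · filter_upwards with a
    rw [Real.norm_eq_abs, abs_of_pos (gauss_pos hτ _)]
    exact gauss_le hτ _

lemma gauss_mul_norm_le (hτ : 0 < τ) (z : Euc k) :
    gaussDensity k τ z * ‖z‖ ≤ (2 * Real.pi * τ) ^ (-(k:ℝ)/2) * Real.sqrt (2 * τ) := by
  unfold gaussDensity
  have h1 := norm_mul_exp_le hτ ‖z‖ (norm_nonneg z)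
  have h2 : (0:ℝ) < (2 * Real.pi * τ) ^ (-(k:ℝ)/2) := by
    have : (0:ℝ) < 2 * Real.pi * τ := by positivity
    positivity
  calc (2 * Real.pi * τ) ^ (-(k:ℝ)/2) * Real.exp (-‖z‖ ^ 2 / (2 * τ)) * ‖z‖
      = (2 * Real.pi * τ) ^ (-(k:ℝ)/2) * (‖z‖ * Real.exp (-‖z‖ ^ 2 / (2 * τ))) := by ring
    _ ≤ (2 * Real.pi * τ) ^ (-(k:ℝ)/2) * Real.sqrt (2*τ) := by
        exact mul_le_mul_of_nonneg_left h1 h2.le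

lemma integrable_gauss_smul (hτ : 0 < τ) (x : Euc k) :
    Integrable (fun a => gaussDensity k τ (x - a) • a) μ := by
  set C := (2 * Real.pi * τ) ^ (-(k:ℝ)/2) with hC
  apply Integrable.mono' (integrable_const (C * Real.sqrt (2*τ) + C * ‖x‖))
  · apply Continuous.aestronglyMeasurable
    exact (gauss_cont.comp (continuous_const.sub continuous_id)).smul continuous_id
  · filter_upwards with a
    rw [norm_smul, Real.norm_eq_abs, abs_of_pos (gauss_pos hτ _)]
    have h1 : ‖a‖ ≤ ‖x - a‖ + ‖x‖ := by
      have he : a = x - (x - a) := by abel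
      calc ‖a‖ = ‖x - (x - a)‖ := by rw [← he]
        _ ≤ ‖x‖ + ‖x - a‖ := norm_sub_le x (x - a)
        _ = ‖x - a‖ + ‖x‖ := by ring
    have h2 := gauss_mul_norm_le hτ (x - a)
    have h3 : gaussDensity k τ (x - a) * ‖x‖ ≤ C * ‖x‖ :=
      mul_le_mul_of_nonneg_right (gauss_le hτ _) (norm_nonneg _)
    nlinarith [gauss_pos hτ (x - a), norm_nonneg a]

lemma integrable_gauss_smul_sub (hτ : 0 < τ) (y : Euc k) :
    Integrable (fun a => (-(τ⁻¹ * gaussDensity k τ (y - a))) • (y - a)) μ := by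
  set C := (2 * Real.pi * τ) ^ (-(k:ℝ)/2) with hC
  apply Integrable.mono' (integrable_const (τ⁻¹ * (C * Real.sqrt (2*τ))))
  · apply Continuous.aestronglyMeasurable
    apply Continuous.fun_smul
    · exact ((continuous_const.mul (gauss_cont.comp (continuous_const.sub continuous_id))).neg)
    · exact continuous_const.sub continuous_id
  · filter_upwards with a
    rw [norm_smul, Real.norm_eq_abs, abs_neg, abs_of_pos (mul_pos (inv_pos.2 hτ) (gauss_pos hτ (y - a)))]
    have h2 := gauss_mul_norm_le hτ (y - a)
    have : τ⁻¹ * gaussDensity k τ (y - a) * ‖y - a‖ = τ⁻¹ * (gaussDensity k τ (y - a) * ‖y - a‖) := by ring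
    rw [this]
    exact mul_le_mul_of_nonneg_left h2 (by positivity)




lemma heatDensity_pos (hτ : 0 < τ) (x : Euc k) : 0 < heatDensity μ τ x := by
  rw [heatDensity, integral_pos_iff_support_of_nonneg
    (fun a => (gauss_pos hτ (x - a)).le) (integrable_gauss μ hτ x)]
  have : (Function.support fun a => gaussDensity k τ (x - a)) = Set.univ := by
    ext a; simp [Function.mem_support, (gauss_pos hτ (x - a)).ne']
  rw [this]
  simp

lemma hasGradientAt_heat (hτ : 0 < τ) (y : Euc k) :
    HasGradientAt (heatDensity μ τ)
      (∫ a, (-(τ⁻¹ * gaussDensity k τ (y - a))) • (y - a) ∂μ) y := by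
  set C := (2 * Real.pi * τ) ^ (-(k:ℝ)/2) with hC
  set F' : Euc k → Euc k → (Euc k →L[ℝ] ℝ) :=
    fun x a => (-(τ⁻¹ * gaussDensity k τ (x - a))) • (innerSL ℝ (x - a)) with hF'
  have key : HasFDerivAt (fun x => ∫ a, gaussDensity k τ (x - a) ∂μ)
      (∫ a, F' y a ∂μ) y := by
    apply hasFDerivAt_integral_of_dominated_of_fderiv_le
      (bound := fun _ => τ⁻¹ * (C * Real.sqrt (2*τ))) (s := Metric.ball y 1) (Metric.ball_mem_nhds y one_pos)
    · filter_upwards with x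
      exact (gauss_cont.comp (continuous_const.sub continuous_id)).aestronglyMeasurable
    · exact integrable_gauss μ hτ y
    · apply Continuous.aestronglyMeasurable
      apply Continuous.fun_smul
      · exact ((continuous_const.mul (gauss_cont.comp (continuous_const.sub continuous_id))).neg)
      · exact (innerSL ℝ).continuous.comp (continuous_const.sub continuous_id)
    · filter_upwards with a
      intro x _
      rw [hF']
      simp only
      rw [← _root_.map_smul, innerSL_apply_norm, norm_smul, Real.norm_eq_abs, abs_neg,
        abs_of_pos (mul_pos (inv_pos.2 hτ) (gauss_pos hτ (x - a)))]
      have h2 := gauss_mul_norm_le hτ (x - a)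
      have : τ⁻¹ * gaussDensity k τ (x - a) * ‖x - a‖
          = τ⁻¹ * (gaussDensity k τ (x - a) * ‖x - a‖) := by ring
      rw [this]
      exact mul_le_mul_of_nonneg_left h2 (by positivity)
    · exact integrable_const _
    · filter_upwards with a
      intro x _
      exact hasFDerivAt_gauss hτ a x
  have hcomm : (∫ a, F' y a ∂μ)
      = innerSL ℝ (∫ a, (-(τ⁻¹ * gaussDensity k τ (y - a))) • (y - a) ∂μ) := by
    rw [← (innerSL ℝ).integral_comp_comm (integrable_gauss_smul_sub μ hτ y)]
    congr 1
    funext a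
    rw [hF']
    simp only [_root_.map_smul]
  rw [hasGradientAt_iff_hasFDerivAt]
  have htd : (InnerProductSpace.toDual ℝ (Euc k))
      (∫ a, (-(τ⁻¹ * gaussDensity k τ (y - a))) • (y - a) ∂μ)
      = innerSL ℝ (∫ a, (-(τ⁻¹ * gaussDensity k τ (y - a))) • (y - a) ∂μ) := by
    ext h
    rw [InnerProductSpace.toDual_apply_apply, innerSL_apply_apply]
  rw [htd, ← hcomm]
  exact key

/-- Tweedie's formula `τ • ∇ log p_τ(y) = m_τ(y) - y`. -/
theorem tweedie_formula
    (k : ℕ) (hk : 1 ≤ k) (μ : Measure (Euc k)) [IsProbabilityMeasure μ]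
    (τ : ℝ) (hτ : 0 < τ) (y : Euc k) :
    τ • gradient (logHeat μ τ) y = postMean μ τ y - y := by
  have hp := heatDensity_pos μ hτ y
  set G := ∫ a, (-(τ⁻¹ * gaussDensity k τ (y - a))) • (y - a) ∂μ with hG
  have hheat := hasGradientAt_heat μ hτ y
  have hlog : HasGradientAt (logHeat μ τ) ((heatDensity μ τ y)⁻¹ • G) y := by
    rw [hasGradientAt_iff_hasFDerivAt]
    have h1 := (Real.hasDerivAt_log hp.ne').comp_hasFDerivAt y hheat.hasFDerivAt
    have h2 : (InnerProductSpace.toDual ℝ (Euc k)) ((heatDensity μ τ y)⁻¹ • G)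
        = (heatDensity μ τ y)⁻¹ • (InnerProductSpace.toDual ℝ (Euc k)) G := by
      simp [_root_.map_smul]
    rw [h2]
    exact h1
  rw [hlog.gradient]
  rw [smul_comm]
  have hτG : τ • G = (∫ a, gaussDensity k τ (y - a) • a ∂μ) - (heatDensity μ τ y) • y := by
    rw [hG, ← integral_smul]
    have heq : ∀ a : Euc k, τ • ((-(τ⁻¹ * gaussDensity k τ (y - a))) • (y - a))
        = gaussDensity k τ (y - a) • a - gaussDensity k τ (y - a) • y := by
      intro a
      rw [smul_smul]
      have h3 : τ * (-(τ⁻¹ * gaussDensity k τ (y - a))) = -gaussDensity k τ (y - a) := by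
        field_simp
      rw [h3, neg_smul, smul_sub]
      abel
    simp_rw [heq]
    rw [integral_sub (integrable_gauss_smul μ hτ y) ((integrable_gauss μ hτ y).smul_const y)]
    congr 1
    rw [integral_smul_const]
    rfl
  rw [hτG, smul_sub, smul_smul, inv_mul_cancel₀ hp.ne', one_smul]
  rfl
end
end

section
/- (Fisher Information bounds for bi-Lipschitz encoders, full-dimensional form.) Let d ≥ 1 and let E : ℝ^d → ℝ^d be a C¹ diffeomorphism such that |det DE(x)| is constant in x and there exist constants 0 < c ≤ C with c‖v‖ ≤ ‖DE(x) v‖ ≤ C‖v‖ for all x, v ∈ ℝ^d. Let μ be a Borel probability measure on ℝ^d with a C¹ strictly positive density p whose Fisher Information I(μ) = ∫ p(x) ‖∇ log p(x)‖² dx is finite. Then the pushforward measure E_#μ has density q(z) = p(E^{-1}(z)) / |det DE(E^{-1}(z))|, its Fisher Information I(E_#μ) = ∫ q(z) ‖∇ log q(z)‖² dz is finite, and (1/C²) I(μ) ≤ I(E_#μ) ≤ (1/c²) I(μ). In particular I(E_#μ) = I(μ) when E is an isometry (c = C = 1). -/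
open MeasureTheory

noncomputable section

/-- The Fisher Information of a probability density `p` on `ℝ^d`:
`I = ∫ p(x) ‖∇ log p(x)‖² dx`. -/
def fisherOfDensity {d : ℕ} (p : Euc d → ℝ) : ℝ :=
  ∫ x, p x * ‖gradient (fun y => Real.log (p y)) x‖ ^ 2

/-- The density of the pushforward of the measure with density `p` under the
diffeomorphism `Enc` with inverse `F`: `q(z) = p(F z) / |det DE(F z)|`. -/
def pushDensity {d : ℕ} (Enc F : Euc d → Euc d) (p : Euc d → ℝ) (z : Euc d) : ℝ :=
  p (F z) / |(fderiv ℝ Enc (F z)).det|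

/-- Fisher Information bounds for bi-Lipschitz encoders, full-dimensional
form.  If `Enc` is a `C¹` diffeomorphism with constant `|det DE|` and
`c‖v‖ ≤ ‖DE(x)v‖ ≤ C‖v‖`, and `μ` has `C¹` strictly positive density `p` with finite
Fisher Information, then `E_#μ` has density `q(z) = p(E⁻¹ z)/|det DE(E⁻¹ z)|`, finite
Fisher Information, `(1/C²) I(μ) ≤ I(E_#μ) ≤ (1/c²) I(μ)`, with equality when `c = C = 1`. -/
theorem fisher_info_bounds_bilipschitz_encoder
    (d : ℕ) (hd : 1 ≤ d) (Enc F : Euc d → Euc d)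
    (hEnc : ContDiff ℝ 1 Enc) (hF : ContDiff ℝ 1 F)
    (hleft : Function.LeftInverse F Enc) (hright : Function.RightInverse F Enc)
    (hdet : ∀ x y : Euc d, |(fderiv ℝ Enc x).det| = |(fderiv ℝ Enc y).det|)
    (c C : ℝ) (hc : 0 < c) (hcC : c ≤ C)
    (hlow : ∀ (x v : Euc d), c * ‖v‖ ≤ ‖fderiv ℝ Enc x v‖)
    (hup : ∀ (x v : Euc d), ‖fderiv ℝ Enc x v‖ ≤ C * ‖v‖)
    (p : Euc d → ℝ) (hp : ContDiff ℝ 1 p) (hppos : ∀ x, 0 < p x)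
    (μ : Measure (Euc d)) [IsProbabilityMeasure μ]
    (hμ : μ = volume.withDensity fun x => ENNReal.ofReal (p x))
    (hFIfin : Integrable (fun x => p x * ‖gradient (fun y => Real.log (p y)) x‖ ^ 2)) :
    (Measure.map Enc μ = volume.withDensity fun z => ENNReal.ofReal (pushDensity Enc F p z)) ∧
    Integrable (fun z => pushDensity Enc F p z *
        ‖gradient (fun y => Real.log (pushDensity Enc F p y)) z‖ ^ 2) ∧
    (1 / C ^ 2) * fisherOfDensity p ≤ fisherOfDensity (pushDensity Enc F p) ∧
    fisherOfDensity (pushDensity Enc F p) ≤ (1 / c ^ 2) * fisherOfDensity p ∧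
    (c = 1 → C = 1 → fisherOfDensity (pushDensity Enc F p) = fisherOfDensity p) := by
  have hC : 0 < C := lt_of_lt_of_le hc hcC
  have hEncd : ∀ x, DifferentiableAt ℝ Enc x := fun x => hEnc.differentiable one_ne_zero x
  have hFd : ∀ z, DifferentiableAt ℝ F z := fun z => hF.differentiable one_ne_zero z
  -- inverse derivative identities
  have hcomp1 : ∀ x, (fderiv ℝ F (Enc x)).comp (fderiv ℝ Enc x)
      = ContinuousLinearMap.id ℝ (Euc d) := by
    intro x
    have h1 : fderiv ℝ (F ∘ Enc) x = (fderiv ℝ F (Enc x)).comp (fderiv ℝ Enc x) :=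
      fderiv_comp x (hFd _) (hEncd _)
    have h2 : F ∘ Enc = id := funext hleft
    rw [h2, fderiv_id] at h1
    exact h1.symm
  have hcomp2 : ∀ z, (fderiv ℝ Enc (F z)).comp (fderiv ℝ F z)
      = ContinuousLinearMap.id ℝ (Euc d) := by
    intro z
    have h1 : fderiv ℝ (Enc ∘ F) z = (fderiv ℝ Enc (F z)).comp (fderiv ℝ F z) :=
      fderiv_comp z (hEncd _) (hFd _)
    have h2 : Enc ∘ F = id := funext hright
    rw [h2, fderiv_id] at h1
    exact h1.symm
  -- determinant is a positive constant D
  set D : ℝ := |(fderiv ℝ Enc 0).det| with hDdef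
  have hD : ∀ x, |(fderiv ℝ Enc x).det| = D := fun x => hdet x 0
  have hdetne : ∀ x, (fderiv ℝ Enc x).det ≠ 0 := by
    intro x hdz
    have h1 := congrArg ContinuousLinearMap.det (hcomp1 x)
    rw [ContinuousLinearMap.det] at h1
    simp only [ContinuousLinearMap.coe_comp, LinearMap.det_comp,
      ContinuousLinearMap.coe_id, LinearMap.det_id] at h1
    rw [ContinuousLinearMap.toLinearMap_comp, LinearMap.det_comp] at h1
    rw [ContinuousLinearMap.det] at hdz
    rw [hdz, mul_zero] at h1
    have hid : (ContinuousLinearMap.id ℝ (Euc d)).det = 1 := by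
      simp [ContinuousLinearMap.det]
    rw [hid] at h1
    exact zero_ne_one h1
  have hDpos : 0 < D := by
    rw [hDdef]; exact abs_pos.mpr (hdetne 0)
  -- pushDensity rewriting
  have hq : ∀ z, pushDensity Enc F p z = p (F z) / D := by
    intro z; rw [pushDensity, hD]
  have hqEnc : ∀ x, pushDensity Enc F p (Enc x) = p x / D := by
    intro x; rw [hq, hleft x]
  -- log densities
  have hlogp : ContDiff ℝ 1 (fun x => Real.log (p x)) := by
    rw [contDiff_iff_contDiffAt]
    intro x
    exact (Real.contDiffAt_log.mpr (hppos x).ne').comp x hp.contDiffAt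
  have hlogq_eq : (fun z => Real.log (pushDensity Enc F p z))
      = fun z => Real.log (p (F z)) - Real.log D := by
    funext z
    rw [hq, Real.log_div (hppos _).ne' hDpos.ne']
  have hlogpF : ContDiff ℝ 1 (fun z => Real.log (p (F z))) := by
    rw [contDiff_iff_contDiffAt]
    intro z
    exact ((Real.contDiffAt_log.mpr (hppos (F z)).ne').comp (F z) hp.contDiffAt).comp z hF.contDiffAt
  have hlogq : ContDiff ℝ 1 (fun z => Real.log (pushDensity Enc F p z)) := by
    rw [hlogq_eq]
    exact hlogpF.sub contDiff_const
  -- derivative of log q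
  have hfderivq : ∀ z, fderiv ℝ (fun z => Real.log (pushDensity Enc F p z)) z
      = (fderiv ℝ (fun x => Real.log (p x)) (F z)).comp (fderiv ℝ F z) := by
    intro z
    rw [hlogq_eq, fderiv_sub_const]
    exact fderiv_comp z (hlogp.differentiable one_ne_zero _) (hFd z)
  -- gradient norms equal fderiv norms
  have hgradnorm : ∀ (f : Euc d → ℝ) (x : Euc d), ‖gradient f x‖ = ‖fderiv ℝ f x‖ := by
    intro f x
    unfold gradient
    exact (InnerProductSpace.toDual ℝ (Euc d)).symm.norm_map _
  -- operator norm bounds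
  have hAnorm : ∀ x, ‖fderiv ℝ Enc x‖ ≤ C :=
    fun x => ContinuousLinearMap.opNorm_le_bound _ hC.le (hup x)
  have hBnorm : ∀ x, ‖fderiv ℝ F (Enc x)‖ ≤ 1 / c := by
    intro x
    apply ContinuousLinearMap.opNorm_le_bound _ (by positivity)
    intro w
    have h1 : fderiv ℝ Enc x (fderiv ℝ F (Enc x) w) = w := by
      have h2 := congrArg (fun T : Euc d →L[ℝ] Euc d => T w) (hcomp2 (Enc x))
      simpa [hleft x] using h2
    have h3 := hlow x (fderiv ℝ F (Enc x) w)
    rw [h1] at h3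
    rw [div_mul_eq_mul_div, le_div_iff₀ hc, one_mul]
    linarith
  -- key pointwise bounds
  have keyup : ∀ x, ‖fderiv ℝ (fun z => Real.log (pushDensity Enc F p z)) (Enc x)‖
      ≤ (1 / c) * ‖fderiv ℝ (fun y => Real.log (p y)) x‖ := by
    intro x
    rw [hfderivq, hleft x]
    calc ‖(fderiv ℝ (fun y => Real.log (p y)) x).comp (fderiv ℝ F (Enc x))‖
        ≤ ‖fderiv ℝ (fun y => Real.log (p y)) x‖ * ‖fderiv ℝ F (Enc x)‖ :=
          ContinuousLinearMap.opNorm_comp_le _ _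
      _ ≤ ‖fderiv ℝ (fun y => Real.log (p y)) x‖ * (1 / c) := by
          exact mul_le_mul_of_nonneg_left (hBnorm x) (norm_nonneg _)
      _ = (1 / c) * ‖fderiv ℝ (fun y => Real.log (p y)) x‖ := mul_comm _ _
  have keylow : ∀ x, (1 / C) * ‖fderiv ℝ (fun y => Real.log (p y)) x‖
      ≤ ‖fderiv ℝ (fun z => Real.log (pushDensity Enc F p z)) (Enc x)‖ := by
    intro x
    have hLeq : fderiv ℝ (fun y => Real.log (p y)) x
        = ((fderiv ℝ (fun y => Real.log (p y)) x).comp (fderiv ℝ F (Enc x))).comp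
            (fderiv ℝ Enc x) := by
      rw [ContinuousLinearMap.comp_assoc, hcomp1 x, ContinuousLinearMap.comp_id]
    have h4 : ‖fderiv ℝ (fun y => Real.log (p y)) x‖
        ≤ ‖(fderiv ℝ (fun y => Real.log (p y)) x).comp (fderiv ℝ F (Enc x))‖ * C := by
      calc ‖fderiv ℝ (fun y => Real.log (p y)) x‖
          = ‖((fderiv ℝ (fun y => Real.log (p y)) x).comp (fderiv ℝ F (Enc x))).comp
              (fderiv ℝ Enc x)‖ := by rw [← hLeq]
        _ ≤ ‖(fderiv ℝ (fun y => Real.log (p y)) x).comp (fderiv ℝ F (Enc x))‖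
              * ‖fderiv ℝ Enc x‖ := ContinuousLinearMap.opNorm_comp_le _ _
        _ ≤ _ := mul_le_mul_of_nonneg_left (hAnorm x) (norm_nonneg _)
    rw [hfderivq, hleft x]
    rw [one_div, inv_mul_le_iff₀ hC, mul_comm]
    exact h4
  -- change of variables setup
  have hmeasEnc : Measurable Enc := hEnc.continuous.measurable
  have hasfd : ∀ x ∈ (Set.univ : Set (Euc d)), HasFDerivWithinAt Enc (fderiv ℝ Enc x) Set.univ x :=
    fun x _ => (hEncd x).hasFDerivAt.hasFDerivWithinAt
  have hinj : Set.InjOn Enc Set.univ := hleft.injective.injOn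
  have himg : Enc '' Set.univ = Set.univ := by
    rw [Set.image_univ]; exact hright.surjective.range_eq
  -- Part 1: pushforward formula
  have part1 : Measure.map Enc μ
      = volume.withDensity fun z => ENNReal.ofReal (pushDensity Enc F p z) := by
    ext s hs
    rw [Measure.map_apply hmeasEnc hs, hμ, withDensity_apply _ (hs.preimage hmeasEnc),
      withDensity_apply _ hs]
    have hps : MeasurableSet (Enc ⁻¹' s) := hs.preimage hmeasEnc
    have hasfd' : ∀ x ∈ Enc ⁻¹' s, HasFDerivWithinAt Enc (fderiv ℝ Enc x) (Enc ⁻¹' s) x :=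
      fun x _ => (hEncd x).hasFDerivAt.hasFDerivWithinAt
    have hinj' : Set.InjOn Enc (Enc ⁻¹' s) := hleft.injective.injOn
    have himgs : Enc '' (Enc ⁻¹' s) = s := Set.image_preimage_eq s hright.surjective
    have hcv := lintegral_image_eq_lintegral_abs_det_fderiv_mul volume hps hasfd' hinj'
      (fun z => ENNReal.ofReal (pushDensity Enc F p z))
    rw [himgs] at hcv
    rw [hcv]
    congr 1
    funext x
    rw [hD, hqEnc, ← ENNReal.ofReal_mul hDpos.le]
    congr 1
    field_simp
  -- the transported integrand
  set φ : Euc d → ℝ := fun x =>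
    p x * ‖gradient (fun z => Real.log (pushDensity Enc F p z)) (Enc x)‖ ^ 2 with hφdef
  have hchg : fisherOfDensity (pushDensity Enc F p) = ∫ x, φ x := by
    rw [fisherOfDensity, ← setIntegral_univ, ← himg,
      integral_image_eq_integral_abs_det_fderiv_smul volume MeasurableSet.univ hasfd hinj,
      setIntegral_univ]
    congr 1
    funext x
    rw [hφdef, smul_eq_mul, hD, hqEnc]
    field_simp
  -- pointwise bounds
  have keyup' : ∀ x, φ x ≤ (1 / c ^ 2) * (p x * ‖gradient (fun y => Real.log (p y)) x‖ ^ 2) := by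
    intro x
    rw [hφdef]
    simp only
    rw [hgradnorm, hgradnorm]
    calc p x * ‖fderiv ℝ (fun z => Real.log (pushDensity Enc F p z)) (Enc x)‖ ^ 2
        ≤ p x * ((1 / c) * ‖fderiv ℝ (fun y => Real.log (p y)) x‖) ^ 2 :=
          mul_le_mul_of_nonneg_left (pow_le_pow_left₀ (norm_nonneg _) (keyup x) 2) (hppos x).le
      _ = (1 / c ^ 2) * (p x * ‖fderiv ℝ (fun y => Real.log (p y)) x‖ ^ 2) := by ring
  have keylow' : ∀ x, (1 / C ^ 2) * (p x * ‖gradient (fun y => Real.log (p y)) x‖ ^ 2) ≤ φ x := by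
    intro x
    rw [hφdef]
    simp only
    rw [hgradnorm, hgradnorm]
    calc (1 / C ^ 2) * (p x * ‖fderiv ℝ (fun y => Real.log (p y)) x‖ ^ 2)
        = p x * ((1 / C) * ‖fderiv ℝ (fun y => Real.log (p y)) x‖) ^ 2 := by ring
      _ ≤ p x * ‖fderiv ℝ (fun z => Real.log (pushDensity Enc F p z)) (Enc x)‖ ^ 2 :=
          mul_le_mul_of_nonneg_left (pow_le_pow_left₀ (mul_nonneg (div_nonneg zero_le_one hC.le) (norm_nonneg _)) (keylow x) 2) (hppos x).le
  -- integrability of φ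
  have hgradcont : Continuous fun z => gradient (fun w => Real.log (pushDensity Enc F p w)) z := by
    unfold gradient
    exact (InnerProductSpace.toDual ℝ (Euc d)).symm.continuous.comp
      (hlogq.continuous_fderiv one_ne_zero)
  have hφcont : Continuous φ := by
    rw [hφdef]
    exact hp.continuous.mul (((hgradcont.comp hEnc.continuous).norm).pow 2)
  have hφnonneg : ∀ x, 0 ≤ φ x := by
    intro x
    exact mul_nonneg (hppos x).le (pow_nonneg (norm_nonneg _) 2)
  have hφint : Integrable φ := by
    apply Integrable.mono' (hFIfin.const_mul (1 / c ^ 2)) hφcont.aestronglyMeasurable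
    filter_upwards with x
    rw [Real.norm_eq_abs, abs_of_nonneg (hφnonneg x)]
    exact keyup' x
  -- Part 2: integrability of the pushforward Fisher integrand
  have part2 : Integrable (fun z => pushDensity Enc F p z *
      ‖gradient (fun y => Real.log (pushDensity Enc F p y)) z‖ ^ 2) := by
    rw [← integrableOn_univ, ← himg,
      integrableOn_image_iff_integrableOn_abs_det_fderiv_smul volume MeasurableSet.univ hasfd hinj,
      integrableOn_univ]
    have heq : (fun x => |(fderiv ℝ Enc x).det| • (pushDensity Enc F p (Enc x) *
        ‖gradient (fun y => Real.log (pushDensity Enc F p y)) (Enc x)‖ ^ 2)) = φ := by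
      funext x
      rw [hφdef, smul_eq_mul, hD, hqEnc]
      field_simp
    rw [heq]
    exact hφint
  -- Parts 3-5: the bounds
  have low : (1 / C ^ 2) * fisherOfDensity p ≤ fisherOfDensity (pushDensity Enc F p) := by
    rw [hchg, fisherOfDensity, ← MeasureTheory.integral_const_mul]
    exact integral_mono (hFIfin.const_mul _) hφint keylow'
  have high : fisherOfDensity (pushDensity Enc F p) ≤ (1 / c ^ 2) * fisherOfDensity p := by
    rw [hchg, fisherOfDensity, ← MeasureTheory.integral_const_mul]
    exact integral_mono hφint (hFIfin.const_mul _) keyup'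
  refine ⟨part1, part2, low, high, ?_⟩
  intro hc1 hC1
  subst hc1; subst hC1
  have h1 : (1 : ℝ) / 1 ^ 2 = 1 := by norm_num
  rw [h1, one_mul] at low high
  exact le_antisymm high low
end
end

section
/- (Spherical moment lower bound for metric distortion.) Let m ≥ 2 and d ≥ 1, let A ∈ ℝ^{d×m} be any matrix, and let σ denote the surface measure on the unit sphere S^{m−1} ⊂ ℝ^m. Then ∫_{S^{m−1}} (‖A v‖² − 1)² dσ(v) ≥ (2 σ(S^{m−1}) / (m(m+2))) · ‖AᵀA − I_m‖₂², where ‖·‖₂ denotes the operator (spectral) norm of a matrix. -/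
open MeasureTheory

noncomputable section

section
open Metric Finset
namespace SMLB
variable {m : ℕ}


lemma coord_abs_le_norm (v : Euc m) (i : Fin m) : |v i| ≤ ‖v‖ := by
  rw [EuclideanSpace.norm_eq, ← Real.sqrt_sq_eq_abs]
  apply Real.sqrt_le_sqrt
  simpa [Real.norm_eq_abs, sq_abs] using
    Finset.single_le_sum (f := fun t => (v t) ^ 2) (fun t _ => sq_nonneg _) (mem_univ i)

lemma norm_sq_eq (v : Euc m) : ‖v‖ ^ 2 = ∑ i, v i * v i := by
  rw [EuclideanSpace.norm_eq, Real.sq_sqrt (by positivity)]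
  simp [Real.norm_eq_abs, sq_abs, sq]

/-- reflection of coordinate `i` -/
def reflMap (i : Fin m) : Euc m →ₗ[ℝ] Euc m where
  toFun v := WithLp.toLp 2 (fun t => if t = i then -(v t) else v t)
  map_add' x y := by ext t; by_cases h : t = i <;> simp [h] <;> ring
  map_smul' c x := by ext t; by_cases h : t = i <;> simp [h] <;> ring

lemma reflMap_apply (i : Fin m) (v : Euc m) (t : Fin m) :
    reflMap i v t = if t = i then -(v t) else v t := rfl

def reflIso (i : Fin m) : Euc m ≃ₗᵢ[ℝ] Euc m where
  toLinearEquiv := LinearEquiv.ofInvolutive (reflMap i) (fun v => by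
    ext t
    by_cases h : t = i <;> simp [reflMap_apply, h])
  norm_map' v := by
    rw [EuclideanSpace.norm_eq, EuclideanSpace.norm_eq]
    congr 1
    refine Finset.sum_congr rfl fun t _ => ?_
    show ‖reflMap i v t‖ ^ 2 = _
    by_cases h : t = i <;> simp [reflMap_apply, h]

lemma reflIso_apply (i : Fin m) (v : Euc m) (t : Fin m) :
    reflIso i v t = if t = i then -(v t) else v t := rfl



lemma sum_split {i j : Fin m} (hij : i ≠ j) (f : Fin m → ℝ) :
    ∑ t, f t = f i + (f j + ∑ t ∈ (univ.erase i).erase j, f t) := by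
  rw [Finset.add_sum_erase _ f (Finset.mem_erase.2 ⟨hij.symm, mem_univ j⟩),
    Finset.add_sum_erase _ f (mem_univ i)]

def hadMap (i j : Fin m) : Euc m →ₗ[ℝ] Euc m where
  toFun v := WithLp.toLp 2 (fun t => if t = i then (v i + v j) / Real.sqrt 2
    else if t = j then (v i - v j) / Real.sqrt 2 else v t)
  map_add' x y := by
    ext t
    by_cases h : t = i
    · simp [h]; ring
    · by_cases h' : t = j
      · have hji : j ≠ i := fun e => h (h'.trans e)
        simp [h, h', hji]; ring
      · simp [h, h']
  map_smul' c x := by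
    ext t
    by_cases h : t = i
    · simp [h]; ring
    · by_cases h' : t = j
      · have hji : j ≠ i := fun e => h (h'.trans e)
        simp [h, h', hji]; ring
      · simp [h, h']

lemma hadMap_apply (i j : Fin m) (v : Euc m) (t : Fin m) :
    hadMap i j v t = if t = i then (v i + v j) / Real.sqrt 2
      else if t = j then (v i - v j) / Real.sqrt 2 else v t := rfl

lemma sqrt2_ne : Real.sqrt 2 ≠ 0 := by positivity
lemma sqrt2_sq : Real.sqrt 2 * Real.sqrt 2 = 2 := Real.mul_self_sqrt (by norm_num)

def hadIso (i j : Fin m) (hij : i ≠ j) : Euc m ≃ₗᵢ[ℝ] Euc m where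
  toLinearEquiv := LinearEquiv.ofInvolutive (hadMap i j) (fun v => by
    ext t
    have hji : j ≠ i := hij.symm
    by_cases h : t = i
    · subst h
      simp only [hadMap_apply, if_pos rfl, if_neg hij, if_neg hji, if_true, if_false]
      field_simp
      rw [Real.sq_sqrt (by norm_num : (2:ℝ) ≥ 0)]; ring
    · by_cases h' : t = j
      · subst h'
        simp only [hadMap_apply, if_neg hji, if_pos rfl, if_neg hij, if_true, if_false]
        field_simp
        rw [Real.sq_sqrt (by norm_num : (2:ℝ) ≥ 0)]; ring
      · simp [hadMap_apply, h, h'])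
  norm_map' v := by
    have hji : j ≠ i := hij.symm
    show ‖hadMap i j v‖ = ‖v‖
    rw [EuclideanSpace.norm_eq, EuclideanSpace.norm_eq]
    congr 1
    rw [sum_split hij (fun t => ‖hadMap i j v t‖ ^ 2),
      sum_split hij (fun t => ‖v t‖ ^ 2)]
    have hrest : ∑ t ∈ (univ.erase i).erase j, ‖hadMap i j v t‖ ^ 2
        = ∑ t ∈ (univ.erase i).erase j, ‖v t‖ ^ 2 := by
      refine Finset.sum_congr rfl fun t ht => ?_
      have htj : t ≠ j := (Finset.mem_erase.1 ht).1
      have hti : t ≠ i := (Finset.mem_erase.1 (Finset.mem_erase.1 ht).2).1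
      simp [hadMap_apply, hti, htj]
    rw [hrest]
    have : ‖hadMap i j v i‖ ^ 2 + ‖hadMap i j v j‖ ^ 2 = ‖v i‖ ^ 2 + ‖v j‖ ^ 2 := by
      simp only [hadMap_apply, if_pos rfl, if_neg hji, Real.norm_eq_abs, sq_abs,
        if_true, eq_self_iff_true]
      rw [div_pow, div_pow, Real.sq_sqrt (by norm_num : (2:ℝ) ≥ 0)]
      ring
    linarith [this]

lemma hadIso_apply (i j : Fin m) (hij : i ≠ j) (v : Euc m) (t : Fin m) :
    hadIso i j hij v t = if t = i then (v i + v j) / Real.sqrt 2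
      else if t = j then (v i - v j) / Real.sqrt 2 else v t := rfl



lemma cont_coord (i : Fin m) : Continuous fun v : Euc m => v i :=
  (EuclideanSpace.proj (𝕜 := ℝ) i).continuous


section Moments
variable (ν : Measure (Euc m)) [IsFiniteMeasure ν]

def M4 (j k l p : Fin m) : ℝ := ∫ v, v j * v k * v l * v p ∂ν

variable (hsupp : ∀ᵐ v ∂ν, ‖v‖ = 1)

include hsupp in
lemma integrable_M4 (j k l p : Fin m) :
    Integrable (fun v : Euc m => v j * v k * v l * v p) ν := by
  apply Integrable.mono' (integrable_const (1 : ℝ))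
  · exact ((((cont_coord j).mul (cont_coord k)).mul (cont_coord l)).mul
      (cont_coord p)).aestronglyMeasurable
  · filter_upwards [hsupp] with v hv
    have h1 : ∀ t, |v t| ≤ 1 := fun t => (coord_abs_le_norm v t).trans_eq hv
    rw [Real.norm_eq_abs, abs_mul, abs_mul, abs_mul]
    exact mul_le_one₀ (mul_le_one₀ (mul_le_one₀ (h1 j) (abs_nonneg _) (h1 k))
      (abs_nonneg _) (h1 l)) (abs_nonneg _) (h1 p)

variable (hinv : ∀ (L : Euc m ≃ₗᵢ[ℝ] Euc m) (f : Euc m → ℝ), Continuous f →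
    ∫ v, f (L v) ∂ν = ∫ v, f v ∂ν)

include hinv in
lemma M4_vanish (t j k l p : Fin m)
    (h : ∀ v : Euc m, (reflIso t v) j * (reflIso t v) k * (reflIso t v) l * (reflIso t v) p
      = -(v j * v k * v l * v p)) : M4 ν j k l p = 0 := by
  have h1 := hinv (reflIso t) (fun v => v j * v k * v l * v p)
    ((((cont_coord j).mul (cont_coord k)).mul (cont_coord l)).mul (cont_coord p))
  have h2 : ∫ v, -(v j * v k * v l * v p) ∂ν = ∫ v, v j * v k * v l * v p ∂ν := by
    rw [← h1]
    exact integral_congr_ae (Filter.Eventually.of_forall fun v => (h v).symm)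
  rw [integral_neg] at h2
  unfold M4
  linarith

include hinv in
lemma M4_iiij (i j : Fin m) (hij : i ≠ j) : M4 ν i i i j = 0 := by
  apply M4_vanish ν hinv j
  intro v
  simp only [reflIso_apply, if_neg hij, if_pos rfl, if_true]
  ring

include hinv in
lemma M4_ijjj (i j : Fin m) (hij : i ≠ j) : M4 ν i j j j = 0 := by
  apply M4_vanish ν hinv i
  intro v
  simp only [reflIso_apply, if_neg hij.symm, if_pos rfl, if_true]
  ring

lemma had_pow4p (a b : ℝ) :
    (a + b) / Real.sqrt 2 * ((a + b) / Real.sqrt 2) * ((a + b) / Real.sqrt 2)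
        * ((a + b) / Real.sqrt 2)
      = (1/4) * (a*a*a*a) + (a*a*a*b + ((3/2) * (a*a*b*b) + (a*b*b*b + (1/4) * (b*b*b*b)))) := by
  have key : ∀ x : ℝ, x / Real.sqrt 2 * (x / Real.sqrt 2) * (x / Real.sqrt 2) * (x / Real.sqrt 2)
      = x * x * (x * x) / (Real.sqrt 2 * Real.sqrt 2 * (Real.sqrt 2 * Real.sqrt 2)) :=
    fun x => by ring
  rw [key, sqrt2_sq]; ring

lemma had_pow4m (a b : ℝ) :
    (a - b) / Real.sqrt 2 * ((a - b) / Real.sqrt 2) * ((a - b) / Real.sqrt 2)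
        * ((a - b) / Real.sqrt 2)
      = (1/4) * (a*a*a*a) + ((-1) * (a*a*a*b) + ((3/2) * (a*a*b*b)
          + ((-1) * (a*b*b*b) + (1/4) * (b*b*b*b)))) := by
  have key : ∀ x : ℝ, x / Real.sqrt 2 * (x / Real.sqrt 2) * (x / Real.sqrt 2) * (x / Real.sqrt 2)
      = x * x * (x * x) / (Real.sqrt 2 * Real.sqrt 2 * (Real.sqrt 2 * Real.sqrt 2)) :=
    fun x => by ring
  rw [key, sqrt2_sq]; ring

include hsupp hinv in
lemma had_rel_p (i j : Fin m) (hij : i ≠ j) :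
    M4 ν i i i i = (1/4) * M4 ν i i i i + M4 ν i i i j + (3/2) * M4 ν i i j j
      + M4 ν i j j j + (1/4) * M4 ν j j j j := by
  have I1 := (integrable_M4 ν hsupp i i i i).const_mul (1/4 : ℝ)
  have I2 := integrable_M4 ν hsupp i i i j
  have I3 := (integrable_M4 ν hsupp i i j j).const_mul (3/2 : ℝ)
  have I4 := integrable_M4 ν hsupp i j j j
  have I5 := (integrable_M4 ν hsupp j j j j).const_mul (1/4 : ℝ)
  have h1 := hinv (hadIso i j hij) (fun v => v i * v i * v i * v i)
    ((((cont_coord i).mul (cont_coord i)).mul (cont_coord i)).mul (cont_coord i))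
  have h2 : (fun v : Euc m => (hadIso i j hij v) i * (hadIso i j hij v) i
        * (hadIso i j hij v) i * (hadIso i j hij v) i)
      = fun v : Euc m => (1/4) * (v i*v i*v i*v i) + (v i*v i*v i*v j
          + ((3/2) * (v i*v i*v j*v j) + (v i*v j*v j*v j + (1/4) * (v j*v j*v j*v j)))) := by
    funext v
    simp only [hadIso_apply, if_pos rfl]
    exact had_pow4p (v i) (v j)
  rw [h2] at h1
  have e1 : ∫ v, ((1/4) * (v i*v i*v i*v i) + (v i*v i*v i*v j
        + ((3/2) * (v i*v i*v j*v j) + (v i*v j*v j*v j + (1/4) * (v j*v j*v j*v j))))) ∂ν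
      = (∫ v, (1/4) * (v i*v i*v i*v i) ∂ν) + ∫ v, (v i*v i*v i*v j
        + ((3/2) * (v i*v i*v j*v j) + (v i*v j*v j*v j + (1/4) * (v j*v j*v j*v j)))) ∂ν :=
    integral_add I1 (I2.add (I3.add (I4.add I5)))
  have e2 : ∫ v, (v i*v i*v i*v j
        + ((3/2) * (v i*v i*v j*v j) + (v i*v j*v j*v j + (1/4) * (v j*v j*v j*v j)))) ∂ν
      = (∫ v, v i*v i*v i*v j ∂ν) + ∫ v, ((3/2) * (v i*v i*v j*v j)
        + (v i*v j*v j*v j + (1/4) * (v j*v j*v j*v j))) ∂ν :=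
    integral_add I2 (I3.add (I4.add I5))
  have e3 : ∫ v, ((3/2) * (v i*v i*v j*v j) + (v i*v j*v j*v j + (1/4) * (v j*v j*v j*v j))) ∂ν
      = (∫ v, (3/2) * (v i*v i*v j*v j) ∂ν)
        + ∫ v, (v i*v j*v j*v j + (1/4) * (v j*v j*v j*v j)) ∂ν :=
    integral_add I3 (I4.add I5)
  have e4 : ∫ v, (v i*v j*v j*v j + (1/4) * (v j*v j*v j*v j)) ∂ν
      = (∫ v, v i*v j*v j*v j ∂ν) + ∫ v, (1/4) * (v j*v j*v j*v j) ∂ν :=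
    integral_add I4 I5
  have f1 : ∫ v, (1/4) * (v i*v i*v i*v i) ∂ν = (1/4) * M4 ν i i i i :=
    integral_const_mul _ _
  have f3 : ∫ v, (3/2) * (v i*v i*v j*v j) ∂ν = (3/2) * M4 ν i i j j :=
    integral_const_mul _ _
  have f5 : ∫ v, (1/4) * (v j*v j*v j*v j) ∂ν = (1/4) * M4 ν j j j j :=
    integral_const_mul _ _
  have g0 : ∫ v, (fun v : Euc m => v i * v i * v i * v i) v ∂ν = M4 ν i i i i := rfl
  have g2 : ∫ v, v i*v i*v i*v j ∂ν = M4 ν i i i j := rfl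
  have g4 : ∫ v, v i*v j*v j*v j ∂ν = M4 ν i j j j := rfl
  rw [e1, e2, e3, e4, f1, f3, f5, g0, g2, g4] at h1
  linarith

include hsupp hinv in
lemma had_rel_m (i j : Fin m) (hij : i ≠ j) :
    M4 ν j j j j = (1/4) * M4 ν i i i i - M4 ν i i i j + (3/2) * M4 ν i i j j
      - M4 ν i j j j + (1/4) * M4 ν j j j j := by
  have I1 := (integrable_M4 ν hsupp i i i i).const_mul (1/4 : ℝ)
  have I2 := (integrable_M4 ν hsupp i i i j).const_mul (-1 : ℝ)
  have I3 := (integrable_M4 ν hsupp i i j j).const_mul (3/2 : ℝ)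
  have I4 := (integrable_M4 ν hsupp i j j j).const_mul (-1 : ℝ)
  have I5 := (integrable_M4 ν hsupp j j j j).const_mul (1/4 : ℝ)
  have h1 := hinv (hadIso i j hij) (fun v => v j * v j * v j * v j)
    ((((cont_coord j).mul (cont_coord j)).mul (cont_coord j)).mul (cont_coord j))
  have h2 : (fun v : Euc m => (hadIso i j hij v) j * (hadIso i j hij v) j
        * (hadIso i j hij v) j * (hadIso i j hij v) j)
      = fun v : Euc m => (1/4) * (v i*v i*v i*v i) + ((-1) * (v i*v i*v i*v j)
          + ((3/2) * (v i*v i*v j*v j) + ((-1) * (v i*v j*v j*v j)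
            + (1/4) * (v j*v j*v j*v j)))) := by
    funext v
    simp only [hadIso_apply, if_neg hij.symm, if_pos rfl]
    exact had_pow4m (v i) (v j)
  rw [h2] at h1
  have e1 : ∫ v, ((1/4) * (v i*v i*v i*v i) + ((-1) * (v i*v i*v i*v j)
        + ((3/2) * (v i*v i*v j*v j) + ((-1) * (v i*v j*v j*v j)
          + (1/4) * (v j*v j*v j*v j))))) ∂ν
      = (∫ v, (1/4) * (v i*v i*v i*v i) ∂ν) + ∫ v, ((-1) * (v i*v i*v i*v j)
        + ((3/2) * (v i*v i*v j*v j) + ((-1) * (v i*v j*v j*v j)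
          + (1/4) * (v j*v j*v j*v j)))) ∂ν :=
    integral_add I1 (I2.add (I3.add (I4.add I5)))
  have e2 : ∫ v, ((-1) * (v i*v i*v i*v j)
        + ((3/2) * (v i*v i*v j*v j) + ((-1) * (v i*v j*v j*v j)
          + (1/4) * (v j*v j*v j*v j)))) ∂ν
      = (∫ v, (-1) * (v i*v i*v i*v j) ∂ν) + ∫ v, ((3/2) * (v i*v i*v j*v j)
        + ((-1) * (v i*v j*v j*v j) + (1/4) * (v j*v j*v j*v j))) ∂ν :=
    integral_add I2 (I3.add (I4.add I5))
  have e3 : ∫ v, ((3/2) * (v i*v i*v j*v j) + ((-1) * (v i*v j*v j*v j)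
        + (1/4) * (v j*v j*v j*v j))) ∂ν
      = (∫ v, (3/2) * (v i*v i*v j*v j) ∂ν)
        + ∫ v, ((-1) * (v i*v j*v j*v j) + (1/4) * (v j*v j*v j*v j)) ∂ν :=
    integral_add I3 (I4.add I5)
  have e4 : ∫ v, ((-1) * (v i*v j*v j*v j) + (1/4) * (v j*v j*v j*v j)) ∂ν
      = (∫ v, (-1) * (v i*v j*v j*v j) ∂ν) + ∫ v, (1/4) * (v j*v j*v j*v j) ∂ν :=
    integral_add I4 I5
  have f1 : ∫ v, (1/4) * (v i*v i*v i*v i) ∂ν = (1/4) * M4 ν i i i i :=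
    integral_const_mul _ _
  have f2 : ∫ v, (-1) * (v i*v i*v i*v j) ∂ν = (-1) * M4 ν i i i j :=
    integral_const_mul _ _
  have f3 : ∫ v, (3/2) * (v i*v i*v j*v j) ∂ν = (3/2) * M4 ν i i j j :=
    integral_const_mul _ _
  have f4 : ∫ v, (-1) * (v i*v j*v j*v j) ∂ν = (-1) * M4 ν i j j j :=
    integral_const_mul _ _
  have f5 : ∫ v, (1/4) * (v j*v j*v j*v j) ∂ν = (1/4) * M4 ν j j j j :=
    integral_const_mul _ _
  have g0 : ∫ v, (fun v : Euc m => v j * v j * v j * v j) v ∂ν = M4 ν j j j j := rfl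
  rw [e1, e2, e3, e4, f1, f2, f3, f4, f5, g0] at h1
  linarith

include hsupp hinv in
lemma c_eq (i j : Fin m) (hij : i ≠ j) : M4 ν i i i i = M4 ν j j j j := by
  have r1 := had_rel_p ν hsupp hinv i j hij
  have r2 := had_rel_m ν hsupp hinv i j hij
  have z1 := M4_iiij ν hinv i j hij
  have z2 := M4_ijjj ν hinv i j hij
  linarith

include hsupp hinv in
lemma b_eq (i j : Fin m) (hij : i ≠ j) : M4 ν i i j j = M4 ν i i i i / 3 := by
  have r1 := had_rel_p ν hsupp hinv i j hij
  have z1 := M4_iiij ν hinv i j hij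
  have z2 := M4_ijjj ν hinv i j hij
  have hc := c_eq ν hsupp hinv i j hij
  linarith

include hsupp in
lemma sum_M4 : ∑ i : Fin m, ∑ j : Fin m, M4 ν i i j j = (ν Set.univ).toReal := by
  have hint : ∀ i : Fin m, Integrable (fun v : Euc m => ∑ j : Fin m, v i * v i * v j * v j) ν :=
    fun i => integrable_finset_sum _ (fun j _ => integrable_M4 ν hsupp i i j j)
  have h1 : ∫ v, ∑ i : Fin m, ∑ j : Fin m, v i * v i * v j * v j ∂ν
      = ∑ i : Fin m, ∑ j : Fin m, M4 ν i i j j := by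
    rw [integral_finset_sum _ (fun i _ => hint i)]
    exact Finset.sum_congr rfl fun i _ =>
      integral_finset_sum _ (fun j _ => integrable_M4 ν hsupp i i j j)
  have h2 : ∫ v, ∑ i : Fin m, ∑ j : Fin m, v i * v i * v j * v j ∂ν = ∫ _v, (1:ℝ) ∂ν := by
    refine integral_congr_ae ?_
    filter_upwards [hsupp] with v hv
    have hs : ∑ i : Fin m, v i * v i = 1 := by
      have h := norm_sq_eq v
      rw [hv] at h
      simpa using h.symm
    calc ∑ i : Fin m, ∑ j : Fin m, v i * v i * v j * v j
        = (∑ i : Fin m, v i * v i) * (∑ j : Fin m, v j * v j) := by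
          rw [Finset.sum_mul_sum]
          exact Finset.sum_congr rfl fun i _ => Finset.sum_congr rfl fun j _ => by ring
      _ = 1 := by rw [hs]; norm_num
  rw [← h1, h2]
  simp
  rfl

include hsupp hinv in
lemma quad (i0 : Fin m) (j k l p : Fin m) :
    M4 ν j k l p = (M4 ν i0 i0 i0 i0 / 3) *
      ((if j = k then (1:ℝ) else 0) * (if l = p then 1 else 0)
        + (if j = l then (1:ℝ) else 0) * (if k = p then 1 else 0)
        + (if k = l then (1:ℝ) else 0) * (if j = p then 1 else 0)) := by
  have hc : ∀ i : Fin m, M4 ν i i i i = M4 ν i0 i0 i0 i0 := by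
    intro i
    rcases eq_or_ne i i0 with h | h
    · rw [h]
    · exact c_eq ν hsupp hinv i i0 h
  have hb : ∀ i j : Fin m, i ≠ j → M4 ν i i j j = M4 ν i0 i0 i0 i0 / 3 := by
    intro i j hij
    rw [b_eq ν hsupp hinv i j hij, hc i]
  have hcomm : ∀ (a b c e a' b' c' e' : Fin m),
      (∀ v : Euc m, v a * v b * v c * v e = v a' * v b' * v c' * v e') →
      M4 ν a b c e = M4 ν a' b' c' e' := fun _ _ _ _ _ _ _ _ h =>
    integral_congr_ae (Filter.Eventually.of_forall h)
  by_cases hjk : j = k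
  · subst hjk
    by_cases hlp : l = p
    · subst hlp
      by_cases hjl : j = l
      · subst hjl
        rw [hc j]; norm_num
      · rw [hb j l hjl]; simp [hjl]
    · have hz : M4 ν j j l p = 0 := by
        rcases eq_or_ne l j with hlj | hlj
        · subst hlj
          exact M4_iiij ν hinv l p hlp
        · apply M4_vanish ν hinv l
          intro v
          simp only [reflIso_apply, if_neg (fun e : j = l => hlj e.symm),
            if_neg (fun e : p = l => hlp e.symm), if_pos rfl, if_true]
          ring
      rw [hz]
      rcases eq_or_ne j l with h1 | h1
      · have h2 : j ≠ p := fun e => hlp (h1.symm.trans e)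
        simp [hlp, h2]
      · simp [hlp, h1]
  · by_cases hlp : l = p
    · subst hlp
      have hz : M4 ν j k l l = 0 := by
        rcases eq_or_ne j l with h1 | h1
        · subst h1
          rw [hcomm j k j j k j j j (fun v => by ring)]
          exact M4_ijjj ν hinv k j (fun e => hjk e.symm)
        · apply M4_vanish ν hinv j
          intro v
          simp only [reflIso_apply, if_pos rfl, if_neg (fun e : k = j => hjk e.symm),
            if_neg (fun e : l = j => h1 e.symm), if_true]
          ring
      rw [hz]
      rcases eq_or_ne j l with h1 | h1
      · have h2 : k ≠ l := fun e => hjk (h1.trans e.symm)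
        simp [hjk, h2]
      · simp [hjk, h1]
    · rcases eq_or_ne j l with h1 | h1
      · rcases eq_or_ne k p with h2 | h2
        · subst h1; subst h2
          rw [hcomm j k j k j j k k (fun v => by ring), hb j k hjk]
          have h3 : k ≠ j := fun e => hjk e.symm
          simp [hjk, h3]
        · have hz : M4 ν j k l p = 0 := by
            apply M4_vanish ν hinv k
            intro v
            simp only [reflIso_apply, if_pos rfl, if_neg hjk,
              if_neg (fun e : l = k => hjk (h1.trans e)),
              if_neg (fun e : p = k => h2 e.symm), if_true]
            ring
          rw [hz]
          have h3 : k ≠ l := fun e => hjk (h1.trans e.symm)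
          simp [hjk, h2, h3]
      · rcases eq_or_ne j p with h3 | h3
        · rcases eq_or_ne k l with h4 | h4
          · subst h3; subst h4
            rw [hcomm j k k j j j k k (fun v => by ring), hb j k hjk]
            have h5 : k ≠ j := fun e => hjk e.symm
            simp [hjk, h5]
          · have hz : M4 ν j k l p = 0 := by
              apply M4_vanish ν hinv k
              intro v
              simp only [reflIso_apply, if_pos rfl, if_neg hjk,
                if_neg (fun e : l = k => h4 e.symm),
                if_neg (fun e : p = k => hjk (h3.trans e)), if_true]
              ring
            rw [hz]
            simp [hjk, h1, h4]
        · have hz : M4 ν j k l p = 0 := by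
            apply M4_vanish ν hinv j
            intro v
            simp only [reflIso_apply, if_pos rfl, if_neg (fun e : k = j => hjk e.symm),
              if_neg (fun e : l = j => h1 e.symm), if_neg (fun e : p = j => h3 e.symm), if_true]
            ring
          rw [hz]
          simp [hjk, h1, h3]

lemma c0_nonneg (i0 : Fin m) : 0 ≤ M4 ν i0 i0 i0 i0 :=
  integral_nonneg fun v => by show (0:ℝ) ≤ _; nlinarith [sq_nonneg (v i0 * v i0)]

include hsupp hinv in
lemma main_integral (i0 : Fin m) (M : Matrix (Fin m) (Fin m) ℝ)
    (hMs : ∀ j k, M j k = M k j) :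
    ∫ v, (∑ j, ∑ k, M j k * (v j * v k)) ^ 2 ∂ν
      = (M4 ν i0 i0 i0 i0 / 3) * (2 * (∑ j, ∑ k, M j k ^ 2) + (∑ j, M j j) ^ 2) := by
  have hpt : ∀ v : Euc m, (∑ j, ∑ k, M j k * (v j * v k)) ^ 2
      = ∑ j, ∑ l, ∑ k, ∑ p, M j k * M l p * (v j * v k * v l * v p) := by
    intro v
    rw [sq, Finset.sum_mul_sum]
    refine Finset.sum_congr rfl fun j _ => ?_
    refine Finset.sum_congr rfl fun l _ => ?_
    rw [Finset.sum_mul_sum]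
    exact Finset.sum_congr rfl fun k _ => Finset.sum_congr rfl fun p _ => by ring
  have h0 : ∫ v, (∑ j, ∑ k, M j k * (v j * v k)) ^ 2 ∂ν
      = ∫ v, ∑ j, ∑ l, ∑ k, ∑ p, M j k * M l p * (v j * v k * v l * v p) ∂ν :=
    integral_congr_ae (Filter.Eventually.of_forall hpt)
  have h1 : ∫ v, ∑ j, ∑ l, ∑ k, ∑ p, M j k * M l p * (v j * v k * v l * v p) ∂ν
      = ∑ j, ∑ l, ∑ k, ∑ p, M j k * M l p * M4 ν j k l p := by
    rw [integral_finset_sum _ (fun j _ => integrable_finset_sum _ (fun l _ =>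
      integrable_finset_sum _ (fun k _ => integrable_finset_sum _ (fun p _ =>
        (integrable_M4 ν hsupp j k l p).const_mul _))))]
    refine Finset.sum_congr rfl fun j _ => ?_
    rw [integral_finset_sum _ (fun l _ => integrable_finset_sum _ (fun k _ =>
      integrable_finset_sum _ (fun p _ => (integrable_M4 ν hsupp j k l p).const_mul _)))]
    refine Finset.sum_congr rfl fun l _ => ?_
    rw [integral_finset_sum _ (fun k _ => integrable_finset_sum _ (fun p _ =>
      (integrable_M4 ν hsupp j k l p).const_mul _))]
    refine Finset.sum_congr rfl fun k _ => ?_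
    rw [integral_finset_sum _ (fun p _ => (integrable_M4 ν hsupp j k l p).const_mul _)]
    exact Finset.sum_congr rfl fun p _ => integral_const_mul _ _
  have h2 : ∑ j, ∑ l, ∑ k, ∑ p, M j k * M l p * M4 ν j k l p
      = (M4 ν i0 i0 i0 i0 / 3) *
        ∑ j, ∑ l, ∑ k, ∑ p,
          (M j k * M l p * ((if j = k then (1:ℝ) else 0) * (if l = p then 1 else 0))
            + (M j k * M l p * ((if j = l then (1:ℝ) else 0) * (if k = p then 1 else 0))
              + M j k * M l p * ((if k = l then (1:ℝ) else 0) * (if j = p then 1 else 0)))) := by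
    rw [Finset.mul_sum]
    refine Finset.sum_congr rfl fun j _ => ?_
    rw [Finset.mul_sum]
    refine Finset.sum_congr rfl fun l _ => ?_
    rw [Finset.mul_sum]
    refine Finset.sum_congr rfl fun k _ => ?_
    rw [Finset.mul_sum]
    refine Finset.sum_congr rfl fun p _ => ?_
    rw [quad ν hsupp hinv i0 j k l p]
    ring
  have hd1 : ∑ j, ∑ l, ∑ k, ∑ p,
      M j k * M l p * ((if j = k then (1:ℝ) else 0) * (if l = p then 1 else 0))
        = (∑ j, M j j) ^ 2 := by
    simp only [mul_ite, ite_mul, mul_one, one_mul, mul_zero, zero_mul,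
      Finset.sum_ite_eq, Finset.sum_ite_eq', Finset.mem_univ, if_true]
    rw [sq, Finset.sum_mul_sum]
  have hd2 : ∑ j, ∑ l, ∑ k, ∑ p,
      M j k * M l p * ((if j = l then (1:ℝ) else 0) * (if k = p then 1 else 0))
        = ∑ j, ∑ k, M j k * M j k := by
    simp only [mul_ite, ite_mul, mul_one, one_mul, mul_zero, zero_mul,
      Finset.sum_ite_eq, Finset.sum_ite_eq', Finset.mem_univ, if_true,
      Finset.sum_ite_irrel, Finset.sum_const_zero]
  have hd3 : ∑ j, ∑ l, ∑ k, ∑ p,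
      M j k * M l p * ((if k = l then (1:ℝ) else 0) * (if j = p then 1 else 0))
        = ∑ j, ∑ k, M j k * M k j := by
    simp only [mul_ite, ite_mul, mul_one, one_mul, mul_zero, zero_mul,
      Finset.sum_ite_eq, Finset.sum_ite_eq', Finset.mem_univ, if_true,
      Finset.sum_ite_irrel, Finset.sum_const_zero]
  have hsym : ∑ j, ∑ k, M j k * M k j = ∑ j, ∑ k, M j k * M j k :=
    Finset.sum_congr rfl fun j _ => Finset.sum_congr rfl fun k _ => by rw [← hMs j k]
  have hsq : ∑ j, ∑ k, M j k * M j k = ∑ j, ∑ k, M j k ^ 2 :=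
    Finset.sum_congr rfl fun j _ => Finset.sum_congr rfl fun k _ => (sq (M j k)).symm ▸ by ring
  rw [h0, h1, h2]
  simp only [Finset.sum_add_distrib]
  rw [hd1, hd2, hd3, hsym, hsq]
  ring

end Moments

lemma opnorm_sq_le (M : Matrix (Fin m) (Fin m) ℝ) :
    ‖Matrix.toEuclideanCLM (𝕜 := ℝ) (n := Fin m) M‖ ^ 2 ≤ ∑ j, ∑ k, M j k ^ 2 := by
  have hF0 : (0:ℝ) ≤ ∑ j, ∑ k, M j k ^ 2 := by positivity
  have hb : ∀ x : Euc m, ‖(Matrix.toEuclideanCLM (𝕜 := ℝ) (n := Fin m) M) x‖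
      ≤ Real.sqrt (∑ j, ∑ k, M j k ^ 2) * ‖x‖ := by
    intro x
    have hx2 : ‖(Matrix.toEuclideanCLM (𝕜 := ℝ) (n := Fin m) M) x‖ ^ 2
        ≤ (∑ j, ∑ k, M j k ^ 2) * ‖x‖ ^ 2 := by
      rw [norm_sq_eq, norm_sq_eq]
      have hcoord : ∀ j, ((Matrix.toEuclideanCLM (𝕜 := ℝ) (n := Fin m) M) x) j
          = ∑ k, M j k * x k := fun j => rfl
      calc ∑ j, ((Matrix.toEuclideanCLM (𝕜 := ℝ) (n := Fin m) M) x) j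
            * ((Matrix.toEuclideanCLM (𝕜 := ℝ) (n := Fin m) M) x) j
          = ∑ j, (∑ k, M j k * x k) ^ 2 := by
            refine Finset.sum_congr rfl fun j _ => ?_
            rw [hcoord j]; ring
        _ ≤ ∑ j, (∑ k, M j k ^ 2) * ∑ k, x k ^ 2 := by
            refine Finset.sum_le_sum fun j _ => ?_
            exact Finset.sum_mul_sq_le_sq_mul_sq univ _ _
        _ = (∑ j, ∑ k, M j k ^ 2) * ∑ k, x k * x k := by
            rw [← Finset.sum_mul]
            congr 1
            exact Finset.sum_congr rfl fun k _ => by ring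
    have h := Real.sqrt_le_sqrt hx2
    rwa [Real.sqrt_sq (norm_nonneg _), Real.sqrt_mul hF0, Real.sqrt_sq (norm_nonneg x)] at h
  have h := ContinuousLinearMap.opNorm_le_bound _ (Real.sqrt_nonneg _) hb
  calc ‖Matrix.toEuclideanCLM (𝕜 := ℝ) (n := Fin m) M‖ ^ 2
      ≤ Real.sqrt (∑ j, ∑ k, M j k ^ 2) ^ 2 := pow_le_pow_left₀ (norm_nonneg _) h 2
    _ = ∑ j, ∑ k, M j k ^ 2 := Real.sq_sqrt hF0

end SMLB
end

open SMLB in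
/-- spherical moment lower bound for metric distortion. For any matrix
`A ∈ ℝ^{d×m}`, integrating against the surface (Hausdorff) measure `σ` on the unit
sphere `S^{m−1}`:
`∫_{S^{m−1}} (‖Av‖² − 1)² dσ(v) ≥ (2σ(S^{m−1})/(m(m+2))) ‖AᵀA − I_m‖₂²`. -/
theorem spherical_moment_lower_bound (m d : ℕ) (hm : 2 ≤ m) (hd : 1 ≤ d)
    (A : Matrix (Fin d) (Fin m) ℝ) :
    2 * (μH[(m : ℝ) - 1] (Metric.sphere (0 : Euc m) 1)).toReal / ((m : ℝ) * (m + 2)) *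
        ‖Matrix.toEuclideanCLM (𝕜 := ℝ) (n := Fin m) (A.transpose * A - 1)‖ ^ 2 ≤
      ∫ v in Metric.sphere (0 : Euc m) 1,
        (‖(EuclideanSpace.equiv (Fin d) ℝ).symm
            (A.mulVec (EuclideanSpace.equiv (Fin m) ℝ v))‖ ^ 2 - 1) ^ 2
          ∂(μH[(m : ℝ) - 1]) := by
  classical
  set S : Set (Euc m) := Metric.sphere (0 : Euc m) 1 with hS
  have hSmeas : MeasurableSet S := Metric.isClosed_sphere.measurableSet
  set M : Matrix (Fin m) (Fin m) ℝ := A.transpose * A - 1 with hM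
  have hMs : ∀ j k, M j k = M k j := by
    intro j k
    simp only [hM, Matrix.sub_apply, Matrix.mul_apply, Matrix.transpose_apply, Matrix.one_apply]
    congr 1
    · exact Finset.sum_congr rfl fun i _ => mul_comm _ _
    · simp [eq_comm]
  have hptS : ∀ v : Euc m, ‖v‖ = 1 →
      (‖(EuclideanSpace.equiv (Fin d) ℝ).symm
          (A.mulVec (EuclideanSpace.equiv (Fin m) ℝ v))‖ ^ 2 - 1) ^ 2
        = (∑ j, ∑ k, M j k * (v j * v k)) ^ 2 := by
    intro v hv
    have hv2 : ∑ j, v j * v j = 1 := by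
      have h := norm_sq_eq v
      rw [hv] at h
      simpa using h.symm
    have hnorm : ‖(EuclideanSpace.equiv (Fin d) ℝ).symm
        (A.mulVec (EuclideanSpace.equiv (Fin m) ℝ v))‖ ^ 2
        = ∑ i, A.mulVec v i * A.mulVec v i := by
      rw [norm_sq_eq]
      rfl
    have hexp : ∑ i, A.mulVec v i * A.mulVec v i
        = ∑ j, ∑ k, (∑ i, A i j * A i k) * (v j * v k) := by
      have h1 : ∀ i, A.mulVec v i = ∑ j, A i j * v j := fun i => rfl
      calc ∑ i, A.mulVec v i * A.mulVec v i
          = ∑ i, ∑ j, ∑ k, A i j * v j * (A i k * v k) := by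
            refine Finset.sum_congr rfl fun i _ => ?_
            rw [h1 i, Finset.sum_mul_sum]
        _ = ∑ j, ∑ k, ∑ i, A i j * v j * (A i k * v k) := by
            rw [Finset.sum_comm]
            exact Finset.sum_congr rfl fun j _ => Finset.sum_comm
        _ = ∑ j, ∑ k, (∑ i, A i j * A i k) * (v j * v k) := by
            refine Finset.sum_congr rfl fun j _ => Finset.sum_congr rfl fun k _ => ?_
            rw [Finset.sum_mul]
            exact Finset.sum_congr rfl fun i _ => by ring
    have hMsum : ∑ j, ∑ k, M j k * (v j * v k)
        = (∑ j, ∑ k, (∑ i, A i j * A i k) * (v j * v k)) - 1 := by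
      have hterm : ∀ j k : Fin m, M j k * (v j * v k)
          = (∑ i, A i j * A i k) * (v j * v k)
            - (if j = k then (1:ℝ) else 0) * (v j * v k) := by
        intro j k
        simp only [hM, Matrix.sub_apply, Matrix.mul_apply, Matrix.transpose_apply,
          Matrix.one_apply]
        ring
      rw [Finset.sum_congr rfl fun j _ => Finset.sum_congr rfl fun k _ => hterm j k]
      simp only [Finset.sum_sub_distrib]
      congr 1
      have hdel : ∀ j : Fin m, ∑ k, (if j = k then (1:ℝ) else 0) * (v j * v k)
          = v j * v j := by
        intro j
        simp [ite_mul]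
      rw [Finset.sum_congr rfl fun j _ => hdel j, hv2]
    rw [hnorm, hexp, hMsum]
  by_cases hfin : μH[(m : ℝ) - 1] S = ⊤
  · calc 2 * (μH[(m : ℝ) - 1] S).toReal / ((m : ℝ) * (m + 2)) *
          ‖Matrix.toEuclideanCLM (𝕜 := ℝ) (n := Fin m) M‖ ^ 2
        = 0 := by rw [hfin, ENNReal.toReal_top]; ring
      _ ≤ _ := setIntegral_nonneg hSmeas fun v _ => sq_nonneg _
  · set ν : Measure (Euc m) := (μH[(m : ℝ) - 1] : Measure (Euc m)).restrict S with hν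
    haveI : IsFiniteMeasure ν := ⟨by
      rw [hν, Measure.restrict_apply_univ]
      exact lt_top_iff_ne_top.2 hfin⟩
    have hsupp : ∀ᵐ v ∂ν, ‖v‖ = 1 := by
      rw [hν]
      filter_upwards [ae_restrict_mem hSmeas] with v hv
      simpa [hS, mem_sphere_zero_iff_norm] using hv
    have hinv : ∀ (L : Euc m ≃ₗᵢ[ℝ] Euc m) (f : Euc m → ℝ), Continuous f →
        ∫ v, f (L v) ∂ν = ∫ v, f v ∂ν := by
      intro L f _hf
      have hmap : Measure.map L (μH[(m : ℝ) - 1] : Measure (Euc m)) = μH[(m : ℝ) - 1] := by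
        have h := L.isometry.map_hausdorffMeasure (d := (m : ℝ) - 1) (Or.inr L.surjective)
        rwa [Set.range_eq_univ.2 L.surjective, Measure.restrict_univ] at h
      have hpre : L ⁻¹' S = S := by
        ext v
        simp [hS, mem_sphere_zero_iff_norm, L.norm_map]
      have hν' : Measure.map L ν = ν := by
        rw [hν]
        conv_lhs => rw [← hpre]
        rw [← Measure.restrict_map L.continuous.measurable hSmeas, hmap]
      exact MeasurePreserving.integral_comp ⟨L.continuous.measurable, hν'⟩
        (L.toHomeomorph.measurableEmbedding) f
    set i0 : Fin m := ⟨0, by omega⟩ with hi0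
    set b : ℝ := M4 ν i0 i0 i0 i0 / 3 with hbdef
    have hb0 : (0:ℝ) ≤ b := by
      have := c0_nonneg ν i0
      rw [hbdef]; linarith
    have hq := quad ν hsupp hinv i0
    have htot : (ν Set.univ).toReal = (m : ℝ) * (m + 2) * b := by
      rw [← sum_M4 ν hsupp]
      have hterm : ∀ i j : Fin m, M4 ν i i j j = b + (if i = j then 2 * b else 0) := by
        intro i j
        rw [hq i i j j, ← hbdef]
        rcases eq_or_ne i j with h | h
        · subst h; simp only [eq_self_iff_true, if_true]; ring
        · simp only [eq_self_iff_true, if_true, if_neg h]; ring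
      rw [Finset.sum_congr rfl fun i _ => Finset.sum_congr rfl fun j _ => hterm i j]
      have hrow : ∀ i : Fin m, ∑ j : Fin m, (b + if i = j then 2 * b else 0)
          = (m : ℝ) * b + 2 * b := by
        intro i
        rw [Finset.sum_add_distrib, Finset.sum_const, Finset.card_univ]
        simp [Finset.sum_ite_eq, nsmul_eq_mul]
      rw [Finset.sum_congr rfl fun i _ => hrow i, Finset.sum_const, Finset.card_univ]
      simp [nsmul_eq_mul]
      ring
    have hRHS : ∫ v in S,
        (‖(EuclideanSpace.equiv (Fin d) ℝ).symm
            (A.mulVec (EuclideanSpace.equiv (Fin m) ℝ v))‖ ^ 2 - 1) ^ 2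
          ∂(μH[(m : ℝ) - 1])
        = b * (2 * (∑ j, ∑ k, M j k ^ 2) + (∑ j, M j j) ^ 2) := by
      have h1 : ∫ v in S,
          (‖(EuclideanSpace.equiv (Fin d) ℝ).symm
              (A.mulVec (EuclideanSpace.equiv (Fin m) ℝ v))‖ ^ 2 - 1) ^ 2
            ∂(μH[(m : ℝ) - 1])
          = ∫ v, (∑ j, ∑ k, M j k * (v j * v k)) ^ 2 ∂ν := by
        refine integral_congr_ae ?_
        filter_upwards [hsupp] with v hv using hptS v hv
      rw [h1, main_integral ν hsupp hinv i0 M hMs, hbdef]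
    have hμS : (μH[(m : ℝ) - 1] S).toReal = (m : ℝ) * (m + 2) * b := by
      rw [← htot, hν, Measure.restrict_apply_univ]
    have hop := opnorm_sq_le M
    have hmpos : (0:ℝ) < (m : ℝ) * (m + 2) := by
      have h2 : (2:ℝ) ≤ (m:ℝ) := by exact_mod_cast hm
      nlinarith
    have hFnn : (0:ℝ) ≤ ∑ j, ∑ k, M j k ^ 2 := by positivity
    have hnn : (0:ℝ) ≤ ‖Matrix.toEuclideanCLM (𝕜 := ℝ) (n := Fin m) M‖ ^ 2 := sq_nonneg _
    rw [hRHS, hμS]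
    have hkey : 2 * ((m : ℝ) * (m + 2) * b) / ((m : ℝ) * (m + 2)) = 2 * b := by
      field_simp
    rw [hkey]
    nlinarith [sq_nonneg (∑ j, M j j), mul_le_mul_of_nonneg_left hop hb0]
end
end
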